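/- Let d ≥ 1 and let ω : [0,∞) → [0,∞) be continuous, strictly increasing, convex, with ω(0) = 0, such that r ↦ ω(r)/r^d is monotone decreasing on (0,∞). Then there is a constant c depending only on d (one may take c = d·2^d) such that ω(r + αR) − ω(r) ≤ c·α·ω(R) for every 0 < r ≤ R and every α ∈ [0,1]. -/

import Mathlib

open Set

/-- 'Lipschitz' property of the modulus of continuity:
`ω(r + αR) − ω(r) ≤ d·2^d·α·ω(R)` for `0 < r ≤ R` and `α ∈ [0,1]`. -/
theorem omega_lipschitz (d : ℕ) (hd : 1 ≤ d) (ω : ℝ → ℝ)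
    (hω_nonneg : ∀ r : ℝ, 0 ≤ r → 0 ≤ ω r)
    (hω_cont : ContinuousOn ω (Ici (0 : ℝ)))
    (hω_mono : StrictMonoOn ω (Ici (0 : ℝ)))
    (hω_conv : ConvexOn ℝ (Ici (0 : ℝ)) ω)
    (hω_zero : ω 0 = 0)
    (hω_dec : AntitoneOn (fun r : ℝ => ω r / r ^ d) (Ioi (0 : ℝ))) :
    ∀ r R α : ℝ, 0 < r → r ≤ R → 0 ≤ α → α ≤ 1 →
      ω (r + α * R) - ω r ≤ (d * 2 ^ d : ℝ) * α * ω R := by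
  intro r R α hr hrR hα hα1
  have hR : 0 < R := lt_of_lt_of_le hr hrR
  have hden : 0 < 2 * R - r := by linarith
  set t : ℝ := α * R / (2 * R - r) with ht
  have ht0 : 0 ≤ t := by positivity
  have ht1 : t ≤ 1 := by
    rw [div_le_one hden]; nlinarith
  have hcomb : (1 - t) * r + t * (2 * R) = r + α * R := by
    rw [ht]
    have key : α * R / (2 * R - r) * (2 * R - r) = α * R := div_mul_cancel₀ _ hden.ne'
    linear_combination key
  have hrmem : r ∈ Ici (0 : ℝ) := le_of_lt hr
  have h2Rmem : (2 * R) ∈ Ici (0 : ℝ) := by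
    simp only [mem_Ici]; linarith
  have hconv := hω_conv.2 hrmem h2Rmem (by linarith : (0:ℝ) ≤ 1 - t) ht0
    (by ring : (1 - t) + t = 1)
  simp only [smul_eq_mul] at hconv
  rw [hcomb] at hconv
  -- so ω (r + αR) ≤ (1-t) ω r + t ω (2R)
  have hωr : 0 ≤ ω r := hω_nonneg r (le_of_lt hr)
  have hω2R : 0 ≤ ω (2 * R) := hω_nonneg _ (by linarith)
  have hωR : 0 ≤ ω R := hω_nonneg R (le_of_lt hR)
  -- doubling bound : ω (2R) ≤ 2^d * ω R
  have hdec := hω_dec (mem_Ioi.mpr hR) (mem_Ioi.mpr (by linarith : (0:ℝ) < 2 * R))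
    (by linarith : R ≤ 2 * R)
  have hRd : (0:ℝ) < R ^ d := pow_pos hR d
  have h2Rd : (0:ℝ) < (2 * R) ^ d := pow_pos (by linarith) d
  have hdbl : ω (2 * R) ≤ 2 ^ d * ω R := by
    have h1 : ω (2 * R) * R ^ d ≤ ω R * (2 * R) ^ d :=
      (div_le_div_iff₀ h2Rd hRd).mp hdec
    have h2 : (2 * R) ^ d = 2 ^ d * R ^ d := by rw [mul_pow]
    rw [h2] at h1
    have := le_of_mul_le_mul_right (by linarith : ω (2 * R) * R ^ d ≤ (2 ^ d * ω R) * R ^ d) hRd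
    exact this
  -- t ≤ α
  have htα : t ≤ α := by
    rw [ht, div_le_iff₀ hden]
    nlinarith
  have h2d : (1:ℝ) ≤ 2 ^ d := one_le_pow₀ (by norm_num : (1:ℝ) ≤ 2)
  have hd1 : (1:ℝ) ≤ (d : ℝ) := by exact_mod_cast hd
  have hfin : (1:ℝ) * (2 ^ d * α * ω R) ≤ (d:ℝ) * (2 ^ d * α * ω R) :=
    mul_le_mul_of_nonneg_right hd1
      (mul_nonneg (mul_nonneg (le_trans zero_le_one h2d) hα) hωR)
  nlinarith [mul_le_mul_of_nonneg_left hdbl hα, mul_le_mul_of_nonneg_right htα hω2R,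
    mul_nonneg ht0 hωr]
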